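/- arXiv:0910.5655 — 2 statements merged into one kernel-verified Lean document; each statement's English description precedes it below -/
import Mathlib

section
/- (Stationarity of dual quantization.) Let X be a real random variable with P(X ∈ [a,b]) = 1 and let Λ be uniformly distributed on [0,1] and independent of X. Then for any grid Γ = (x_1, …, x_N) in [a,b], the conditional expectation of J_Γ(X,Λ) given X equals X almost surely: E(J_Γ(X,Λ) | X) = X. -/
open MeasureTheory ProbabilityTheory

/-- Index `j*(ξ)` of the segment `[x_j, x_{j+1})` of the grid containing `ξ`
(with default value `N`, corresponding to the closed last segment). -/
noncomputable def jstar (N : ℕ) (x : ℕ → ℝ) (ξ : ℝ) : ℕ :=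
  if h : ∃ j, j ≤ N ∧ x j ≤ ξ ∧ ξ < x (j + 1) then h.choose else N

/-- The dual quantization operator `J_Γ(ξ, λ)` associated with the grid
`x 0 ≤ x 1 ≤ … ≤ x (N+1)`. -/
noncomputable def dualQ (N : ℕ) (x : ℕ → ℝ) (ξ lam : ℝ) : ℝ :=
  if x (jstar N x ξ + 1) = x (jstar N x ξ) then ξ
  else if lam < (x (jstar N x ξ + 1) - ξ) / (x (jstar N x ξ + 1) - x (jstar N x ξ)) then
    x (jstar N x ξ)
  else x (jstar N x ξ + 1)

section Aux

variable {N : ℕ} {x : ℕ → ℝ} {a b ξ lam : ℝ}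

lemma grid_mono (hmono : ∀ j ≤ N, x j ≤ x (j + 1)) :
    ∀ i j, i ≤ j → j ≤ N + 1 → x i ≤ x j := by
  intro i j hij hj
  induction j with
  | zero =>
    have : i = 0 := Nat.le_zero.mp hij
    simp [this]
  | succ k ih =>
    rcases Nat.eq_or_lt_of_le hij with h | h
    · simp [h]
    · exact le_trans (ih (Nat.lt_succ_iff.mp h) (by omega)) (hmono k (by omega))

lemma jstar_le : jstar N x ξ ≤ N := by
  rw [jstar]
  split_ifs with h
  · exact h.choose_spec.1
  · exact le_rfl

lemma jstar_spec (hmono : ∀ j ≤ N, x j ≤ x (j + 1)) (hx0 : x 0 = a) (hxN : x (N + 1) = b)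
    (hξ : ξ ∈ Set.Icc a b) :
    x (jstar N x ξ) ≤ ξ ∧ ξ ≤ x (jstar N x ξ + 1) := by
  rw [jstar]
  split_ifs with h
  · obtain ⟨_, h2, h3⟩ := h.choose_spec
    exact ⟨h2, h3.le⟩
  · have hξb : ξ = b := by
      by_contra hne
      have hlt : ξ < b := lt_of_le_of_ne hξ.2 hne
      have hex : ∃ n, ξ < x (n + 1) := ⟨N, hxN ▸ hlt⟩
      have hmN : Nat.find hex ≤ N := Nat.find_le (hxN ▸ hlt)
      have hlt' : ξ < x (Nat.find hex + 1) := Nat.find_spec hex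
      have hle : x (Nat.find hex) ≤ ξ := by
        rcases Nat.eq_zero_or_pos (Nat.find hex) with h0 | h0
        · rw [h0, hx0]; exact hξ.1
        · obtain ⟨k, hk⟩ := Nat.exists_eq_succ_of_ne_zero h0.ne'
          have := Nat.find_min hex (m := k) (by omega)
          rw [hk]
          exact not_lt.mp this
      exact h ⟨Nat.find hex, hmN, hle, hlt'⟩
    refine ⟨?_, ?_⟩
    · rw [hξb, ← hxN]; exact hmono N le_rfl
    · rw [hξb, hxN]

lemma jstar_eq (hmono : ∀ j ≤ N, x j ≤ x (j + 1)) {j : ℕ} (hj : j ≤ N)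
    (h1 : x j ≤ ξ) (h2 : ξ < x (j + 1)) : jstar N x ξ = j := by
  have hex : ∃ k, k ≤ N ∧ x k ≤ ξ ∧ ξ < x (k + 1) := ⟨j, hj, h1, h2⟩
  rw [jstar, dif_pos hex]
  obtain ⟨hkN, hk1, hk2⟩ := hex.choose_spec
  rcases lt_trichotomy hex.choose j with h | h | h
  · have : x (hex.choose + 1) ≤ x j := grid_mono hmono _ _ (by omega) (by omega)
    linarith
  · exact h
  · have : x (j + 1) ≤ x hex.choose := grid_mono hmono _ _ (by omega) (by omega)
    linarith

lemma jstar_measurable (hmono : ∀ j ≤ N, x j ≤ x (j + 1)) : Measurable (jstar N x) := by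
  apply measurable_to_countable'
  intro j
  by_cases hjN : j ≤ N
  · rcases Nat.lt_or_ge j N with hjlt | hje
    · have : (jstar N x) ⁻¹' {j} = Set.Ico (x j) (x (j + 1)) := by
        ext ξ
        simp only [Set.mem_preimage, Set.mem_singleton_iff, Set.mem_Ico]
        constructor
        · intro h
          rw [jstar] at h
          split_ifs at h with hE
          · obtain ⟨_, h1, h2⟩ := hE.choose_spec
            rw [h] at h1 h2
            exact ⟨h1, h2⟩
          · omega
        · intro ⟨h1, h2⟩
          exact jstar_eq hmono hjN h1 h2
      rw [this]; exact measurableSet_Ico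
    · have hje' : j = N := le_antisymm hjN hje
      subst hje'
      have : (jstar j x) ⁻¹' {j} =
          Set.Ico (x j) (x (j + 1)) ∪ {ξ | ∃ k, k ≤ j ∧ x k ≤ ξ ∧ ξ < x (k + 1)}ᶜ := by
        ext ξ
        simp only [Set.mem_preimage, Set.mem_singleton_iff, Set.mem_union, Set.mem_Ico,
          Set.mem_compl_iff, Set.mem_setOf_eq]
        constructor
        · intro h
          rw [jstar] at h
          split_ifs at h with hE
          · obtain ⟨_, h1, h2⟩ := hE.choose_spec
            rw [h] at h1 h2
            exact Or.inl ⟨h1, h2⟩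
          · exact Or.inr hE
        · rintro (⟨h1, h2⟩ | hE)
          · exact jstar_eq hmono le_rfl h1 h2
          · rw [jstar, dif_neg hE]
      rw [this]
      refine measurableSet_Ico.union (MeasurableSet.compl ?_)
      have : {ξ : ℝ | ∃ k, k ≤ j ∧ x k ≤ ξ ∧ ξ < x (k + 1)} =
          ⋃ k, ⋃ (_ : k ≤ j), Set.Ico (x k) (x (k + 1)) := by
        ext ξ
        simp only [Set.mem_setOf_eq, Set.mem_iUnion, Set.mem_Ico]
        tauto
      rw [this]
      exact MeasurableSet.iUnion fun k => MeasurableSet.iUnion fun _ => measurableSet_Ico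
  · have : (jstar N x) ⁻¹' {j} = ∅ := by
      ext ξ
      simp only [Set.mem_preimage, Set.mem_singleton_iff, Set.mem_empty_iff_false,
        iff_false]
      intro h
      exact hjN (h ▸ jstar_le)
    rw [this]; exact MeasurableSet.empty

lemma dualQ_measurable (hmono : ∀ j ≤ N, x j ≤ x (j + 1)) :
    Measurable (fun p : ℝ × ℝ => dualQ N x p.1 p.2) := by
  have key : ∀ j : ℕ, Measurable (fun p : ℝ × ℝ =>
      if x (j + 1) = x j then p.1
      else if p.2 < (x (j + 1) - p.1) / (x (j + 1) - x j) then x j else x (j + 1)) := by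
    intro j
    by_cases hxe : x (j + 1) = x j
    · simpa [hxe] using measurable_fst
    · simp only [if_neg hxe]
      exact Measurable.ite
        (measurableSet_lt measurable_snd ((measurable_const.sub measurable_fst).div_const _))
        measurable_const measurable_const
  have heq : (fun p : ℝ × ℝ => dualQ N x p.1 p.2) =
      (fun q : (ℝ × ℝ) × ℕ =>
        if x (q.2 + 1) = x q.2 then q.1.1
        else if q.1.2 < (x (q.2 + 1) - q.1.1) / (x (q.2 + 1) - x q.2) then x q.2
        else x (q.2 + 1)) ∘ (fun p => (p, jstar N x p.1)) := by
    ext p; simp [dualQ, Function.comp]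
  rw [heq]
  exact (measurable_from_prod_countable_left key).comp
    (measurable_id.prodMk ((jstar_measurable hmono).comp measurable_fst))

lemma dualQ_mem (hmono : ∀ j ≤ N, x j ≤ x (j + 1)) (hx0 : x 0 = a) (hxN : x (N + 1) = b)
    (hξ : ξ ∈ Set.Icc a b) : dualQ N x ξ lam ∈ Set.Icc a b := by
  obtain ⟨h1, h2⟩ := jstar_spec hmono hx0 hxN hξ
  have hjN : jstar N x ξ ≤ N := jstar_le
  have hlo : a ≤ x (jstar N x ξ) := hx0 ▸ grid_mono hmono 0 _ (Nat.zero_le _) (by omega)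
  have hhi : x (jstar N x ξ + 1) ≤ b := hxN ▸ grid_mono hmono _ (N + 1) (by omega) le_rfl
  rw [dualQ]
  split_ifs
  · exact hξ
  · exact ⟨hlo, le_trans h1 hξ.2⟩
  · exact ⟨le_trans hξ.1 h2, hhi⟩

lemma dualQ_integral (hmono : ∀ j ≤ N, x j ≤ x (j + 1)) (hx0 : x 0 = a) (hxN : x (N + 1) = b)
    (hξ : ξ ∈ Set.Icc a b) :
    ∫ lam, dualQ N x ξ lam ∂(volume.restrict (Set.Icc (0 : ℝ) 1)) = ξ := by
  obtain ⟨h1, h2⟩ := jstar_spec hmono hx0 hxN hξ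
  set j := jstar N x ξ with hj
  by_cases hxe : x (j + 1) = x j
  · simp only [dualQ, ← hj, if_pos hxe]
    rw [integral_const]
    simp [Real.volume_Icc]
  · have hcd : x j < x (j + 1) := lt_of_le_of_ne (le_trans h1 h2) (Ne.symm hxe)
    set t := (x (j + 1) - ξ) / (x (j + 1) - x j) with ht
    have ht0 : 0 ≤ t := div_nonneg (by linarith) (by linarith)
    have ht1 : t ≤ 1 := by
      rw [div_le_one (by linarith)]; linarith
    have hfun : (fun lam => dualQ N x ξ lam) = fun lam =>
        x (j + 1) + (Set.Iio t).indicator (fun _ => x j - x (j + 1)) lam := by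
      ext lam
      simp only [dualQ, ← hj, if_neg hxe, ← ht]
      by_cases hl : lam < t
      · rw [if_pos hl, Set.indicator_of_mem (Set.mem_Iio.mpr hl)]; ring
      · rw [if_neg hl, Set.indicator_of_notMem (by simpa using hl)]; ring
    rw [hfun, integral_add (integrable_const _)
      ((integrable_const _).indicator measurableSet_Iio),
      integral_const, integral_indicator_const _ measurableSet_Iio]
    have hμI : (volume.restrict (Set.Icc (0 : ℝ) 1)) (Set.Iio t) = ENNReal.ofReal t := by
      rw [Measure.restrict_apply measurableSet_Iio]
      have : Set.Iio t ∩ Set.Icc (0 : ℝ) 1 = Set.Ico 0 t := by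
        ext y
        simp only [Set.mem_inter_iff, Set.mem_Iio, Set.mem_Icc, Set.mem_Ico]
        constructor
        · rintro ⟨hy, hy0, _⟩; exact ⟨hy0, hy⟩
        · rintro ⟨hy0, hy⟩; exact ⟨hy, hy0, by linarith⟩
      rw [this, Real.volume_Ico, sub_zero]
    have huniv : (volume.restrict (Set.Icc (0 : ℝ) 1)) Set.univ = 1 := by
      simp [Real.volume_Icc]
    rw [measureReal_def, measureReal_def, hμI, huniv]
    rw [ENNReal.toReal_one, ENNReal.toReal_ofReal ht0]
    have hne : x (j + 1) - x j ≠ 0 := by linarith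
    rw [smul_eq_mul, smul_eq_mul, one_mul, ht]
    field_simp
    ring

end Aux

/-- **Stationarity of dual quantization.** Let `X` be a real random variable with
`P(X ∈ [a,b]) = 1` and let `Λ` be uniformly distributed on `[0,1]` and independent of `X`.
Then for any grid `Γ` in `[a,b]`, `E(J_Γ(X,Λ) | X) = X` almost surely. -/
theorem dualQ_stationary {Ω : Type*} [MeasurableSpace Ω] (P : Measure Ω) [IsProbabilityMeasure P]
    (a b : ℝ) (hab : a < b) (N : ℕ) (x : ℕ → ℝ)
    (hmono : ∀ j ≤ N, x j ≤ x (j + 1)) (hx0 : x 0 = a) (hxN : x (N + 1) = b)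
    (X : Ω → ℝ) (hXmeas : Measurable X) (hXab : ∀ᵐ ω ∂P, X ω ∈ Set.Icc a b)
    (Λ : Ω → ℝ) (hΛmeas : Measurable Λ)
    (hΛ : Measure.map Λ P = volume.restrict (Set.Icc (0 : ℝ) 1))
    (hindep : IndepFun X Λ P) :
    P[fun ω => dualQ N x (X ω) (Λ ω)|MeasurableSpace.comap X inferInstance] =ᵐ[P] X := by
  have hm : MeasurableSpace.comap X inferInstance ≤ (inferInstance : MeasurableSpace Ω) :=
    hXmeas.comap_le
  set M : ℝ := max |a| |b| with hM
  have habs : ∀ y : ℝ, y ∈ Set.Icc a b → ‖y‖ ≤ M := by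
    intro y hy
    rw [Real.norm_eq_abs, abs_le]
    constructor
    · calc -M ≤ -|a| := neg_le_neg (le_max_left _ _)
        _ ≤ a := neg_abs_le a
        _ ≤ y := hy.1
    · exact le_trans hy.2 (le_trans (le_abs_self b) (le_max_right _ _))
  have hf_meas : Measurable (fun ω => dualQ N x (X ω) (Λ ω)) :=
    (dualQ_measurable hmono).comp (hXmeas.prodMk hΛmeas)
  have hf_ae_mem : ∀ᵐ ω ∂P, dualQ N x (X ω) (Λ ω) ∈ Set.Icc a b :=
    hXab.mono fun ω h => dualQ_mem hmono hx0 hxN h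
  have hf_int : Integrable (fun ω => dualQ N x (X ω) (Λ ω)) P :=
    (integrable_const M).mono' hf_meas.aestronglyMeasurable
      (hf_ae_mem.mono fun ω h => habs _ h)
  have hX_int : Integrable X P :=
    (integrable_const M).mono' hXmeas.aestronglyMeasurable (hXab.mono fun ω h => habs _ h)
  haveI : IsProbabilityMeasure (volume.restrict (Set.Icc (0 : ℝ) 1)) :=
    ⟨by simp [Real.volume_Icc]⟩
  haveI : IsProbabilityMeasure (P.map X) := Measure.isProbabilityMeasure_map hXmeas.aemeasurable
  have hprod : P.map (fun ω => (X ω, Λ ω)) = (P.map X).prod (P.map Λ) :=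
    (indepFun_iff_map_prod_eq_prod_map_map hXmeas.aemeasurable hΛmeas.aemeasurable).mp hindep
  have hXmap_ae : ∀ᵐ ξ ∂(P.map X), ξ ∈ Set.Icc a b :=
    (ae_map_iff hXmeas.aemeasurable measurableSet_Icc).mpr hXab
  refine (ae_eq_condExp_of_forall_setIntegral_eq hm hf_int
    (fun s _ _ => hX_int.integrableOn) (fun s hs _ => ?_) ?_).symm
  swap
  · exact StronglyMeasurable.aestronglyMeasurable
      (Measurable.stronglyMeasurable (fun t ht => ⟨t, ht, rfl⟩))
  obtain ⟨t, ht, rfl⟩ := hs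
  -- LHS
  have hLHS : ∫ ω in X ⁻¹' t, X ω ∂P = ∫ ξ in t, ξ ∂(P.map X) :=
    (setIntegral_map ht aestronglyMeasurable_id hXmeas.aemeasurable).symm
  -- RHS
  have hpre : X ⁻¹' t = (fun ω => (X ω, Λ ω)) ⁻¹' (t ×ˢ (Set.univ : Set ℝ)) := by
    ext ω; simp
  have hpairmeas : AEMeasurable (fun ω => (X ω, Λ ω)) P :=
    (hXmeas.prodMk hΛmeas).aemeasurable
  have hRHS : ∫ ω in X ⁻¹' t, dualQ N x (X ω) (Λ ω) ∂P =
      ∫ p in t ×ˢ (Set.univ : Set ℝ), dualQ N x p.1 p.2 ∂(P.map (fun ω => (X ω, Λ ω))) := by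
    rw [hpre]
    exact (setIntegral_map (ht.prod MeasurableSet.univ)
      ((dualQ_measurable hmono).aestronglyMeasurable) hpairmeas).symm
  rw [hLHS, hRHS, hprod, hΛ, ← Measure.prod_restrict t Set.univ, Measure.restrict_univ]
  set μt := (P.map X).restrict t with hμt
  set νΛ := volume.restrict (Set.Icc (0 : ℝ) 1) with hνΛ
  have hμt_ae : ∀ᵐ ξ ∂μt, ξ ∈ Set.Icc a b := ae_restrict_of_ae hXmap_ae
  have hprod_ae : ∀ᵐ p ∂(μt.prod νΛ), p.1 ∈ Set.Icc a b := by
    have h1 : ∀ᵐ ξ ∂((μt.prod νΛ).map Prod.fst), ξ ∈ Set.Icc a b := by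
      rw [Measure.map_fst_prod, measure_univ, one_smul]
      exact hμt_ae
    exact (ae_map_iff measurable_fst.aemeasurable measurableSet_Icc).mp h1
  have hInt : Integrable (fun p : ℝ × ℝ => dualQ N x p.1 p.2) (μt.prod νΛ) :=
    (integrable_const M).mono' (dualQ_measurable hmono).aestronglyMeasurable
      (hprod_ae.mono fun p hp => habs _ (dualQ_mem hmono hx0 hxN hp))
  rw [integral_prod _ hInt]
  refine integral_congr_ae (hμt_ae.mono fun ξ hξ => ?_)
  exact (dualQ_integral hmono hx0 hxN hξ).symm
end

section
/- (Greek with respect to a notional weight.) Let n ≥ 1, α_i > 0 and p_i ∈ (0,1) for i = 1,…,n, K ∈ ℝ, l ∈ {1,…,n}, and let Z_1,…,Z_n be independent Bernoulli random variables with parameters p_i. Set S_{−l} := Σ_{i≠l} α_i Z_i and g(α) := E( S_{−l} + α Z_l − K )_+ for α > 0. If P(S_{−l} = K − α_l) = 0, then g is differentiable at α_l with g′(α_l) = p_l · P( S_{−l} ≥ K − α_l ). -/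
open MeasureTheory ProbabilityTheory

/-- **Greek with respect to a notional weight.** Let `n ≥ 1`, `α_i > 0`,
`p_i ∈ (0,1)`, `K ∈ ℝ`, `l < n`, and let `Z_0,…,Z_{n−1}` be independent Bernoulli(p_i) random
variables. Set `S_{−l} := Σ_{i≠l} α_i Z_i` and `g(α) := E(S_{−l} + α Z_l − K)_+`.
If `P(S_{−l} = K − α_l) = 0`, then `g` is differentiable at `α_l` with
`g′(α_l) = p_l · P(S_{−l} ≥ K − α_l)`. -/
theorem greek_notional_weight {Ω : Type*} [MeasurableSpace Ω] (P : Measure Ω)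
    [IsProbabilityMeasure P]
    (n : ℕ) (hn : 1 ≤ n) (α p : ℕ → ℝ) (K : ℝ) (l : ℕ) (hl : l < n)
    (hα : ∀ i < n, 0 < α i) (hp : ∀ i < n, p i ∈ Set.Ioo (0 : ℝ) 1)
    (Z : ℕ → Ω → ℝ) (hZmeas : ∀ i, Measurable (Z i))
    (hZ01 : ∀ i < n, ∀ ω, Z i ω = 0 ∨ Z i ω = 1)
    (hZp : ∀ i < n, P {ω | Z i ω = 1} = ENNReal.ofReal (p i))
    (hindep : iIndepFun Z P)
    (hnull : P {ω | (∑ i ∈ (Finset.range n).erase l, α i * Z i ω) = K - α l} = 0) :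
    HasDerivAt
      (fun a : ℝ => ∫ ω,
        max ((∑ i ∈ (Finset.range n).erase l, α i * Z i ω) + a * Z l ω - K) 0 ∂P)
      (p l * (P {ω | K - α l ≤ ∑ i ∈ (Finset.range n).erase l, α i * Z i ω}).toReal)
      (α l) := by
  classical
  set s := (Finset.range n).erase l with hs
  set S : Ω → ℝ := fun ω => ∑ i ∈ s, α i * Z i ω with hS
  have hSmeas : Measurable S := by
    apply Finset.measurable_sum
    intro i _
    exact (hZmeas i).const_mul _
  -- F and F'
  set F : ℝ → Ω → ℝ := fun a ω => max (S ω + a * Z l ω - K) 0 with hF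
  set F' : Ω → ℝ := fun ω => Z l ω * (if K - α l ≤ S ω then 1 else 0) with hF'
  -- independence of S and Z l
  have hSl_indep : IndepFun S (Z l) P := by
    set g : ℕ → ℝ → ℝ := fun i x => if i = l then x else α i * x with hg
    have hgmeas : ∀ i, Measurable (g i) := by
      intro i
      by_cases h : i = l
      · simpa [hg, h] using measurable_id'
      · simpa [hg, h] using (measurable_id.const_mul (α i))
    have hcomp : iIndepFun
        (fun i => g i ∘ Z i) P := hindep.comp g hgmeas
    have hWmeas : ∀ i, Measurable (g i ∘ Z i) := fun i => (hgmeas i).comp (hZmeas i)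
    have hind := hcomp.indepFun_finsetSum_of_notMem hWmeas
      (s := s) (i := l) (Finset.notMem_erase l _)
    have e1 : (∑ j ∈ s, g j ∘ Z j) = S := by
      funext ω
      simp only [Finset.sum_apply, Function.comp_apply, hS]
      refine Finset.sum_congr rfl fun i hi => ?_
      simp [hg, Finset.ne_of_mem_erase hi]
    have e2 : g l ∘ Z l = Z l := by funext ω; simp [hg]
    rwa [e1, e2] at hind
  -- Z l values
  have hZl01 : ∀ ω, Z l ω = 0 ∨ Z l ω = 1 := hZ01 l hl
  have hZlabs : ∀ ω, |Z l ω| ≤ 1 := by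
    intro ω; rcases hZl01 ω with h | h <;> simp [h]
  -- measurability of F a
  have hFmeas : ∀ a : ℝ, Measurable (F a) := by
    intro a
    exact ((hSmeas.add ((hZmeas l).const_mul a)).sub measurable_const).max measurable_const
  -- boundedness of S
  obtain ⟨C, hC0, hC⟩ : ∃ C, 0 ≤ C ∧ ∀ ω, |S ω| ≤ C := by
    refine ⟨∑ i ∈ s, |α i|, Finset.sum_nonneg fun i _ => abs_nonneg _, fun ω => ?_⟩
    calc |S ω| ≤ ∑ i ∈ s, |α i * Z i ω| := Finset.abs_sum_le_sum_abs _ _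
    _ ≤ ∑ i ∈ s, |α i| := by
        refine Finset.sum_le_sum fun i hi => ?_
        rw [abs_mul]
        have : |Z i ω| ≤ 1 := by
          rcases hZ01 i (Finset.mem_range.mp (Finset.mem_of_mem_erase hi)) ω with h | h <;>
            simp [h]
        nlinarith [abs_nonneg (α i)]
  -- integrability
  have hFint : ∀ a : ℝ, Integrable (F a) P := by
    intro a
    refine (integrable_const (C + |a| + |K|)).mono' (hFmeas a).aestronglyMeasurable ?_
    filter_upwards with ω
    have h1 : |S ω| ≤ C := hC ω
    have h2 : |a * Z l ω| ≤ |a| := by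
      rw [abs_mul]; nlinarith [hZlabs ω, abs_nonneg a]
    simp only [F, Real.norm_eq_abs, abs_max_sub_max_le_max]
    rw [abs_of_nonneg (le_max_right _ _)]
    have : S ω + a * Z l ω - K ≤ C + |a| + |K| := by
      have := abs_le.mp h1; have := abs_le.mp h2; have := abs_le.mp (le_refl |K|)
      linarith [neg_abs_le K]
    exact max_le this (by nlinarith [abs_nonneg a, abs_nonneg K])
  -- Lipschitz
  have hlip : ∀ ω, LipschitzOnWith (Real.nnabs 1) (fun a => F a ω) (Metric.ball (α l) 1) := by
    intro ω
    have hLW : LipschitzWith (Real.nnabs 1) (fun a => F a ω) := by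
      refine LipschitzWith.of_dist_le_mul fun a b => ?_
      simp only [Real.dist_eq, F]
      have h1 : |max (S ω + a * Z l ω - K) 0 - max (S ω + b * Z l ω - K) 0|
          ≤ |(S ω + a * Z l ω - K) - (S ω + b * Z l ω - K)| := abs_max_sub_max_le_abs _ _ _
      have h2 : |(S ω + a * Z l ω - K) - (S ω + b * Z l ω - K)| = |Z l ω| * |a - b| := by
        rw [← abs_mul]; ring_nf
      have := hZlabs ω
      rw [Real.coe_nnabs, abs_one]
      calc _ ≤ |Z l ω| * |a - b| := by rw [← h2]; exact h1
      _ ≤ 1 * |a - b| := by nlinarith [abs_nonneg (a - b)]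
    exact hLW.lipschitzOnWith
  -- a.e. differentiability
  have hdiff : ∀ᵐ ω ∂P, HasDerivAt (fun a => F a ω) (F' ω) (α l) := by
    have : ∀ ω ∉ {ω | S ω = K - α l}, HasDerivAt (fun a => F a ω) (F' ω) (α l) := by
      intro ω hω
      simp only [Set.mem_setOf_eq] at hω
      rcases hZl01 ω with h0 | h1
      · -- constant
        have : (fun a => F a ω) = fun _ => max (S ω - K) 0 := by
          funext a; simp [F, h0]
        rw [this]
        simpa [F', h0] using hasDerivAt_const (α l) (max (S ω - K) 0)
      · -- Z l ω = 1
        rcases lt_or_gt_of_ne hω with hlt | hgt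
        · -- S < K - α l : locally zero
          have heq : (fun a => F a ω) =ᶠ[nhds (α l)] fun _ => (0 : ℝ) := by
            have hcont : ContinuousAt (fun a : ℝ => S ω + a * Z l ω - K) (α l) := by fun_prop
            have hneg : S ω + α l * Z l ω - K < 0 := by rw [h1]; linarith
            filter_upwards [hcont.eventually_lt_const hneg] with a ha
            simp [F, max_eq_right ha.le]
          have : HasDerivAt (fun _ : ℝ => (0 : ℝ)) 0 (α l) := hasDerivAt_const _ _
          have hres := this.congr_of_eventuallyEq heq
          have : F' ω = 0 := by
            simp only [hF']; rw [if_neg (not_le.mpr hlt)]; ring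
          rw [this]; exact hres
        · -- S > K - α l : locally affine
          have heq : (fun a => F a ω) =ᶠ[nhds (α l)] fun a => S ω + a * Z l ω - K := by
            have hcont : ContinuousAt (fun a : ℝ => S ω + a * Z l ω - K) (α l) := by fun_prop
            have hpos : 0 < S ω + α l * Z l ω - K := by rw [h1]; linarith
            filter_upwards [hcont.eventually_const_lt hpos] with a ha
            simp [F, max_eq_left ha.le]
          have haff : HasDerivAt (fun a : ℝ => S ω + a * Z l ω - K) (Z l ω) (α l) := by
            simpa using (((hasDerivAt_id (α l)).mul_const (Z l ω)).const_add (S ω)).sub_const K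
          have hres := haff.congr_of_eventuallyEq heq
          have : F' ω = Z l ω := by
            simp only [hF']; rw [if_pos hgt.le]; ring
          rw [this]; exact hres
    exact (ae_iff.mpr (by simpa using hnull)).mono fun ω hω => this ω hω
  have hF'meas : Measurable F' := by
    apply (hZmeas l).mul
    have : Measurable fun ω => if K - α l ≤ S ω then (1:ℝ) else 0 := by
      exact Measurable.ite (measurableSet_le measurable_const hSmeas) measurable_const
        measurable_const
    exact this
  have key := hasDerivAt_integral_of_dominated_loc_of_lip (F := F) (F' := F')
    (x₀ := α l) (bound := fun _ => (1 : ℝ)) (Metric.ball_mem_nhds (α l) one_pos)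
    (Filter.Eventually.of_forall fun a => (hFmeas a).aestronglyMeasurable)
    (hFint (α l)) hF'meas.aestronglyMeasurable
    (Filter.Eventually.of_forall hlip) (integrable_const 1)
    hdiff
  have hderiv := key.2
  -- compute the integral of F'
  have hEset : MeasurableSet {ω | Z l ω = 1} := (hZmeas l) (measurableSet_singleton 1)
  have hSset : MeasurableSet {ω | K - α l ≤ S ω} := measurableSet_le measurable_const hSmeas
  have hint_eq : ∫ ω, F' ω ∂P
      = (P ({ω | Z l ω = 1} ∩ {ω | K - α l ≤ S ω})).toReal := by
    rw [← Measure.real_def, ← integral_indicator_one (hEset.inter hSset)]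
    congr 1
    funext ω
    by_cases h1 : Z l ω = 1 <;> by_cases h2 : K - α l ≤ S ω <;>
      rcases hZl01 ω with h0 | h0 <;>
      simp [F', Set.indicator, h1, h2, h0] at * <;> simp_all
  have hmul : P ({ω | Z l ω = 1} ∩ {ω | K - α l ≤ S ω})
      = P {ω | Z l ω = 1} * P {ω | K - α l ≤ S ω} := by
    have := hSl_indep.symm.measure_inter_preimage_eq_mul {(1 : ℝ)} (Set.Ici (K - α l))
      (measurableSet_singleton 1) measurableSet_Ici
    simpa [Set.preimage, Set.mem_Ici] using this
  have hpl : (0:ℝ) ≤ p l := (hp l hl).1.le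
  rw [hint_eq, hmul, ENNReal.toReal_mul, hZp l hl, ENNReal.toReal_ofReal hpl] at hderiv
  exact hderiv
end
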